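/- arXiv:2204.13288 — 2 statements merged into one kernel-verified Lean document; each statement's English description precedes it below -/
import Mathlib

section
/- Let n ≥ 1 and suppose g is C^∞ on an open neighborhood W of (x̄₁, w̄) ∈ ℝ × ℝ^{n−1} such that: ∂₁²g(x̄₁,w̄) = 0; ∂₁³g(q) = 0 at every point q ∈ W with ∂₁²g(q) = 0; ∂₁⁴g(x̄₁,w̄) ≠ 0; and the singular set {q ∈ W : ∂₁²g(q) = 0} coincides with {q ∈ W : ∂₁³g(q) = 0} near (x̄₁,w̄). Then there exist an open neighborhood N of (x̄₁,w̄), an open neighborhood U₂ ∋ w̄ in ℝ^{n−1}, a C^∞ function f : U₂ → ℝ with f(w̄) = x̄₁ whose graph equals the singular set {(x₁,w) ∈ N : ∂₁²g(x₁,w) = 0} near (x̄₁,w̄), and C^∞ functions φ₁, φ₂ on N and k₁, k₂ on U₂ such that for all (x₁,w) ∈ N: P(x₁,w) = (x₁ − f(w))³·φ₁(x₁,w) + k₁(w) and Z(x₁,w) = (x₁ − f(w))³·φ₂(x₁,w) + k₂(w), with φ₁(x̄₁,w̄) ≠ 0. -/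
/-!
Statement 3: the division step in the proof of Theorem 3.6 (Malgrange division,
cubic form along the singular set).  Here `m` plays the role of `n - 1`,
`pd1` is the partial derivative in the first variable, `Pfun g = ∂g/∂x₁` and
`Zfun g = x₁ ∂g/∂x₁ - g`.
-/

/-- Partial derivative in the first variable. -/
noncomputable def pd1 {m : ℕ} (g : ℝ × (Fin m → ℝ) → ℝ) : ℝ × (Fin m → ℝ) → ℝ :=
  fun q => deriv (fun t => g (t, q.2)) q.1

/-- The affine flat coordinate `p₁` of the m-wavefront. -/
noncomputable def Pfun {m : ℕ} (g : ℝ × (Fin m → ℝ) → ℝ) : ℝ × (Fin m → ℝ) → ℝ :=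
  pd1 g

/-- The dual potential `z' = x₁ ∂g/∂x₁ - g` of the m-wavefront. -/
noncomputable def Zfun {m : ℕ} (g : ℝ × (Fin m → ℝ) → ℝ) : ℝ × (Fin m → ℝ) → ℝ :=
  fun q => q.1 * pd1 g q - g q

open Set Metric intervalIntegral ContinuousLinearMap

section Aux

variable {m : ℕ}

theorem slice_hasDerivAt {F : ℝ × (Fin m → ℝ) → ℝ} {W : Set (ℝ × (Fin m → ℝ))}
    (hW : IsOpen W) (hF : ContDiffOn ℝ (⊤ : ℕ∞) F W) {a : ℝ} {w : Fin m → ℝ}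
    (h : (a, w) ∈ W) : HasDerivAt (fun t => F (t, w)) (pd1 F (a, w)) a := by
  have hca : ContDiffAt ℝ (⊤ : ℕ∞) F (a, w) := hF.contDiffAt (hW.mem_nhds h)
  have hslice : ContDiffAt ℝ (⊤ : ℕ∞) (fun t : ℝ => F (t, w)) a :=
    hca.comp a ((contDiff_id.prodMk contDiff_const).contDiffAt)
  have hd : DifferentiableAt ℝ (fun t : ℝ => F (t, w)) a :=
    hslice.differentiableAt (by simp)
  simpa [pd1] using hd.hasDerivAt

theorem pd1_eq_fderiv {F : ℝ × (Fin m → ℝ) → ℝ} {W : Set (ℝ × (Fin m → ℝ))}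
    (hW : IsOpen W) (hF : ContDiffOn ℝ (⊤ : ℕ∞) F W) {q : ℝ × (Fin m → ℝ)}
    (h : q ∈ W) : pd1 F q = fderiv ℝ F q (1, 0) := by
  have hca : ContDiffAt ℝ (⊤ : ℕ∞) F q := hF.contDiffAt (hW.mem_nhds h)
  have hd : DifferentiableAt ℝ F q := hca.differentiableAt (by simp)
  have h1 : HasDerivAt (fun t : ℝ => (t, q.2)) ((1 : ℝ), (0 : Fin m → ℝ)) q.1 :=
    (hasDerivAt_id q.1).prodMk (hasDerivAt_const _ _)
  have := hd.hasFDerivAt.comp_hasDerivAt q.1 (by simpa using h1)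
  simpa [pd1, Function.comp_def] using this.deriv

theorem pd1_contDiffOn {F : ℝ × (Fin m → ℝ) → ℝ} {W : Set (ℝ × (Fin m → ℝ))}
    (hW : IsOpen W) (hF : ContDiffOn ℝ (⊤ : ℕ∞) F W) :
    ContDiffOn ℝ (⊤ : ℕ∞) (pd1 F) W := by
  have hfd : ContDiffOn ℝ (⊤ : ℕ∞) (fderiv ℝ F) W :=
    hF.fderiv_of_isOpen hW (by exact_mod_cast le_top)
  have : ContDiffOn ℝ (⊤ : ℕ∞) (fun q => fderiv ℝ F q (1, 0)) W :=
    (ContinuousLinearMap.apply ℝ ℝ ((1:ℝ), (0 : Fin m → ℝ))).contDiff.comp_contDiffOn hfd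
  exact this.congr fun q hq => pd1_eq_fderiv hW hF hq

end Aux

set_option synthInstance.maxHeartbeats 1000000 in
theorem contDiff_parametric_integral {E : Type} [NormedAddCommGroup E] [NormedSpace ℝ E]
    [FiniteDimensional ℝ E] :
    ∀ (n : ℕ) {B : Type} [NormedAddCommGroup B] [NormedSpace ℝ B] [CompleteSpace B]
      (F : E × ℝ → B), ContDiff ℝ (⊤ : ℕ∞) F →
      ContDiff ℝ (n : ℕ∞) (fun x => ∫ t in (0:ℝ)..1, F (x, t)) := by
  intro n
  induction n with
  | zero =>
    intro B _ _ _ F hF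
    have : ((((0:ℕ):ℕ∞)) : WithTop ℕ∞) = 0 := by norm_cast
    rw [this, contDiff_zero]
    exact continuous_parametric_intervalIntegral_of_continuous'
      (by exact hF.continuous) 0 1
  | succ n ih =>
    intro B _ _ _ F hF
    set G : E × ℝ → E →L[ℝ] B :=
      fun p => ((compL ℝ E (E × ℝ) B).flip (ContinuousLinearMap.inl ℝ E ℝ)) (fderiv ℝ F p)
      with hGdef
    have hfd : ContDiff ℝ (⊤ : ℕ∞) (fderiv ℝ F) := (contDiff_infty_iff_fderiv.mp hF).2
    have hG : ContDiff ℝ (⊤ : ℕ∞) G :=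
      ((compL ℝ E (E × ℝ) B).flip (ContinuousLinearMap.inl ℝ E ℝ)).contDiff.comp hfd
    have hdiffF : ∀ (x : E) (t : ℝ), HasFDerivAt (fun y => F (y, t)) (G (x, t)) x := by
      intro x t
      have h1 : HasFDerivAt (fun y : E => (y, t)) (ContinuousLinearMap.inl ℝ E ℝ) x := by
        exact (hasFDerivAt_id x).prodMk (hasFDerivAt_const t x)
      have h2 : HasFDerivAt F (fderiv ℝ F (x, t)) (x, t) :=
        (hF.differentiable (by simp) (x, t)).hasFDerivAt
      exact h2.comp x h1
    have key : ∀ x₀ : E, HasFDerivAt (fun x => ∫ t in (0:ℝ)..1, F (x, t))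
        (∫ t in (0:ℝ)..1, G (x₀, t)) x₀ := by
      intro x₀
      have hK : IsCompact (closedBall x₀ 1 ×ˢ Icc (-1 : ℝ) 2) :=
        (isCompact_closedBall _ _).prod isCompact_Icc
      obtain ⟨C, hC⟩ : ∃ C, ∀ p ∈ closedBall x₀ 1 ×ˢ Icc (-1 : ℝ) 2, ‖G p‖ ≤ C :=
        hK.exists_bound_of_continuousOn hG.continuous.continuousOn
      apply intervalIntegral.hasFDerivAt_integral_of_dominated_of_fderiv_le
        (F := fun x t => F (x, t)) (F' := fun x t => G (x, t)) (bound := fun _ => C)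
        (ball_mem_nhds x₀ one_pos)
      · filter_upwards with x
        exact (hF.continuous.comp (Continuous.prodMk_right x)).aestronglyMeasurable
      · exact (hF.continuous.comp (Continuous.prodMk_right x₀)).intervalIntegrable 0 1
      · exact (hG.continuous.comp (Continuous.prodMk_right x₀)).aestronglyMeasurable
      · filter_upwards with t ht x hx
        rw [Set.uIoc_of_le (by norm_num : (0:ℝ) ≤ 1)] at ht
        exact hC (x, t) ⟨ball_subset_closedBall hx,
          ⟨by linarith [ht.1], by linarith [ht.2]⟩⟩
      · exact intervalIntegrable_const
      · filter_upwards with t ht x hx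
        exact hdiffF x t
    have hdiff : Differentiable ℝ (fun x => ∫ t in (0:ℝ)..1, F (x, t)) :=
      fun x₀ => (key x₀).differentiableAt
    have hfderiv : (fderiv ℝ (fun x => ∫ t in (0:ℝ)..1, F (x, t)))
        = fun x₀ => ∫ t in (0:ℝ)..1, G (x₀, t) := funext fun x₀ => (key x₀).fderiv
    have hcast : ((((n+1:ℕ)):ℕ∞) : WithTop ℕ∞) = (((n:ℕ):ℕ∞) : WithTop ℕ∞) + 1 := by
      norm_cast
    rw [hcast, contDiff_succ_iff_fderiv]
    refine ⟨hdiff, by simp, ?_⟩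
    rw [hfderiv]
    exact ih G hG

section Shear

variable {F : Type} [NormedAddCommGroup F] [NormedSpace ℝ F]

noncomputable def shearEquiv (D : (ℝ × F) →L[ℝ] ℝ) (ha : D (1, 0) ≠ 0) :
    (ℝ × F) ≃L[ℝ] (ℝ × F) :=
  ContinuousLinearEquiv.equivOfInverse (D.prod (snd ℝ ℝ F))
    (((D (1, 0))⁻¹ • (fst ℝ ℝ F - D.comp ((inr ℝ ℝ F).comp (snd ℝ ℝ F)))).prod (snd ℝ ℝ F))
    (by
      rintro ⟨x, w⟩
      have hd : ∀ t : ℝ, ∀ v : F, D (t, v) = t * D (1, 0) + D (0, v) := by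
        intro t v
        have : ((t : ℝ), v) = t • ((1 : ℝ), (0 : F)) + ((0 : ℝ), v) := by
          simp [Prod.ext_iff]
        rw [this, map_add, map_smul, smul_eq_mul]
      simp only [ContinuousLinearMap.prod_apply, ContinuousLinearMap.coe_snd',
        ContinuousLinearMap.smul_apply, ContinuousLinearMap.sub_apply,
        ContinuousLinearMap.coe_fst', ContinuousLinearMap.coe_comp', Function.comp_apply,
        ContinuousLinearMap.inr_apply]
      refine Prod.ext ?_ rfl
      simp only [hd x w]
      rw [smul_eq_mul]
      field_simp
      ring)
    (by
      rintro ⟨y, w⟩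
      have hd : ∀ t : ℝ, ∀ v : F, D (t, v) = t * D (1, 0) + D (0, v) := by
        intro t v
        have : ((t : ℝ), v) = t • ((1 : ℝ), (0 : F)) + ((0 : ℝ), v) := by
          simp [Prod.ext_iff]
        rw [this, map_add, map_smul, smul_eq_mul]
      simp only [ContinuousLinearMap.prod_apply, ContinuousLinearMap.coe_snd',
        ContinuousLinearMap.smul_apply, ContinuousLinearMap.sub_apply,
        ContinuousLinearMap.coe_fst', ContinuousLinearMap.coe_comp', Function.comp_apply,
        ContinuousLinearMap.inr_apply]
      refine Prod.ext ?_ rfl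
      rw [hd]
      rw [smul_eq_mul]
      field_simp
      ring)

@[simp] theorem shearEquiv_coe (D : (ℝ × F) →L[ℝ] ℝ) (ha : D (1, 0) ≠ 0) :
    ((shearEquiv D ha : (ℝ × F) ≃L[ℝ] (ℝ × F)) : (ℝ × F) →L[ℝ] (ℝ × F)) = D.prod (snd ℝ ℝ F) := by
  ext q <;> simp [shearEquiv]

end Shear

theorem cubic_taylor {u u1 u2 u3 : ℝ → ℝ}
    (h1 : ∀ s ∈ Set.uIcc (0:ℝ) 1, HasDerivAt u (u1 s) s)
    (h2 : ∀ s ∈ Set.uIcc (0:ℝ) 1, HasDerivAt u1 (u2 s) s)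
    (h3 : ∀ s ∈ Set.uIcc (0:ℝ) 1, HasDerivAt u2 (u3 s) s)
    (hc : ContinuousOn u3 (Set.uIcc (0:ℝ) 1)) :
    u 1 = u 0 + u1 0 + u2 0 / 2 + ∫ t in (0:ℝ)..1, ((1-t)^2/2) * u3 t := by
  have hv : ∀ s ∈ Set.uIcc (0:ℝ) 1,
      HasDerivAt (fun t => u t + (1-t) * u1 t + ((1-t)^2/2) * u2 t)
        (((1-s)^2/2) * u3 s) s := by
    intro s hs
    have B : HasDerivAt (fun t : ℝ => 1 - t) (-1) s := by
      simpa using (hasDerivAt_id s).const_sub 1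
    have C := B.mul (h2 s hs)
    have Dsq : HasDerivAt (fun t : ℝ => (1-t)^2/2) ((2 * (1-s)^1 * (-1))/2) s :=
      (B.pow 2).div_const 2
    have Efull := Dsq.mul (h3 s hs)
    have total := ((h1 s hs).add C).add Efull
    exact total.congr_deriv (by ring)
  have hint : IntervalIntegrable (fun t => ((1-t)^2/2) * u3 t) MeasureTheory.volume 0 1 := by
    apply ContinuousOn.intervalIntegrable
    exact (Continuous.continuousOn (by continuity)).mul hc
  have := intervalIntegral.integral_eq_sub_of_hasDerivAt hv hint
  rw [this]
  ring

theorem smooth_extension {m : ℕ} {G : ℝ × (Fin m → ℝ) → ℝ} {W : Set (ℝ × (Fin m → ℝ))}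
    (hW : IsOpen W) (hG : ContDiffOn ℝ (⊤ : ℕ∞) G W) {c : ℝ × (Fin m → ℝ)} {r : ℝ}
    (hr : 0 < r) (hball : Metric.closedBall c r ⊆ W) :
    ∃ H : ℝ × (Fin m → ℝ) → ℝ, ContDiff ℝ (⊤ : ℕ∞) H ∧
      ∀ q ∈ Metric.closedBall c (r/2), H q = G q := by
  have : HasContDiffBump (ℝ × (Fin m → ℝ)) := by infer_instance
  let χ : ContDiffBump c := ⟨r/2, r, by positivity, by linarith⟩
  refine ⟨fun q => χ q * Set.indicator W G q, ?_, ?_⟩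
  · rw [contDiff_iff_contDiffAt]
    intro q
    by_cases hq : q ∈ W
    · have hev : (fun q => χ q * Set.indicator W G q) =ᶠ[nhds q]
          (fun q => χ q * G q) := by
        filter_upwards [hW.mem_nhds hq] with p hp
        rw [Set.indicator_of_mem hp]
      exact ContDiffAt.congr_of_eventuallyEq
        ((χ.contDiff.contDiffAt).mul (hG.contDiffAt (hW.mem_nhds hq))) hev
    · have hq' : q ∈ (tsupport (χ : (ℝ × (Fin m → ℝ)) → ℝ))ᶜ := by
        intro hmem
        apply hq
        apply hball
        have : tsupport (χ : (ℝ × (Fin m → ℝ)) → ℝ) ⊆ Metric.closedBall c r := by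
          rw [tsupport]
          rw [χ.support_eq]
          exact closure_ball_subset_closedBall
        exact this hmem
      have hev : (fun q => χ q * Set.indicator W G q) =ᶠ[nhds q]
          (fun _ => (0:ℝ)) := by
        filter_upwards [(isClosed_tsupport _).isOpen_compl.mem_nhds hq'] with p hp
        have : χ p = 0 := image_eq_zero_of_notMem_tsupport hp
        rw [this, zero_mul]
      exact ContDiffAt.congr_of_eventuallyEq contDiffAt_const hev
  · intro q hq
    have h1 : χ q = 1 := χ.one_of_mem_closedBall hq
    have h2 : q ∈ W := hball (Metric.closedBall_subset_closedBall (by linarith) hq)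
    simp only []
    rw [h1, one_mul, Set.indicator_of_mem h2]

theorem integ16 (K : ℝ) : (∫ t in (0:ℝ)..1, ((1-t)^2/2) * K) = K/6 := by
  have h : (fun t : ℝ => ((1-t)^2/2) * K) = fun t : ℝ => ((K/2)*t^2 - K*t) + K/2 := by
    funext t; ring
  rw [h]
  rw [intervalIntegral.integral_add ((Continuous.intervalIntegrable (by continuity) 0 1))
    ((Continuous.intervalIntegrable (by continuity) 0 1))]
  rw [intervalIntegral.integral_sub ((Continuous.intervalIntegrable (by continuity) 0 1))
    ((Continuous.intervalIntegrable (by continuity) 0 1))]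
  rw [intervalIntegral.integral_const_mul, intervalIntegral.integral_const_mul]
  rw [integral_pow, integral_id]
  simp
  ring

set_option maxHeartbeats 2000000 in
theorem division_step_semidefinite {m : ℕ} (g : ℝ × (Fin m → ℝ) → ℝ)
    (xb : ℝ) (wb : Fin m → ℝ)
    (W : Set (ℝ × (Fin m → ℝ))) (hWopen : IsOpen W) (hmem : (xb, wb) ∈ W)
    (hg : ContDiffOn ℝ (⊤ : ℕ∞) g W)
    (h2 : pd1 (pd1 g) (xb, wb) = 0)
    (h3 : ∀ q ∈ W, pd1 (pd1 g) q = 0 → pd1 (pd1 (pd1 g)) q = 0)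
    (h4 : pd1 (pd1 (pd1 (pd1 g))) (xb, wb) ≠ 0)
    (hsing : ∃ W' : Set (ℝ × (Fin m → ℝ)), IsOpen W' ∧ (xb, wb) ∈ W' ∧ W' ⊆ W ∧
      {q | q ∈ W' ∧ pd1 (pd1 g) q = 0} = {q | q ∈ W' ∧ pd1 (pd1 (pd1 g)) q = 0}) :
    ∃ (N : Set (ℝ × (Fin m → ℝ))) (U₂ : Set (Fin m → ℝ)) (f : (Fin m → ℝ) → ℝ)
      (φ₁ φ₂ : ℝ × (Fin m → ℝ) → ℝ) (k₁ k₂ : (Fin m → ℝ) → ℝ),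
      IsOpen N ∧ (xb, wb) ∈ N ∧ N ⊆ W ∧
      IsOpen U₂ ∧ wb ∈ U₂ ∧
      ContDiffOn ℝ (⊤ : ℕ∞) f U₂ ∧ f wb = xb ∧
      {q | q ∈ N ∧ pd1 (pd1 g) q = 0} = {q | ∃ w ∈ U₂, q = (f w, w)} ∩ N ∧
      ContDiffOn ℝ (⊤ : ℕ∞) φ₁ N ∧ ContDiffOn ℝ (⊤ : ℕ∞) φ₂ N ∧
      ContDiffOn ℝ (⊤ : ℕ∞) k₁ U₂ ∧ ContDiffOn ℝ (⊤ : ℕ∞) k₂ U₂ ∧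
      (∀ q ∈ N, Pfun g q = (q.1 - f q.2) ^ 3 * φ₁ q + k₁ q.2 ∧
        Zfun g q = (q.1 - f q.2) ^ 3 * φ₂ q + k₂ q.2) ∧
      φ₁ (xb, wb) ≠ 0 := by
    classical
  obtain ⟨W', hW'open, hW'mem, hW'sub, hW'eq⟩ := hsing
  set c : ℝ × (Fin m → ℝ) := (xb, wb) with hcdef
  have hg1 : ContDiffOn ℝ (⊤:ℕ∞) (pd1 g) W := pd1_contDiffOn hWopen hg
  have hg2 : ContDiffOn ℝ (⊤:ℕ∞) (pd1 (pd1 g)) W := pd1_contDiffOn hWopen hg1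
  have hg3 : ContDiffOn ℝ (⊤:ℕ∞) (pd1 (pd1 (pd1 g))) W := pd1_contDiffOn hWopen hg2
  have hg4 : ContDiffOn ℝ (⊤:ℕ∞) (pd1 (pd1 (pd1 (pd1 g)))) W := pd1_contDiffOn hWopen hg3
  have hc3 : pd1 (pd1 (pd1 g)) c = 0 := h3 c hmem h2
  -- the local diffeomorphism
  have hDne : fderiv ℝ (pd1 (pd1 (pd1 g))) c (1, 0) ≠ 0 := by
    rw [← pd1_eq_fderiv hWopen hg3 hmem]; exact h4
  set Φ : ℝ × (Fin m → ℝ) → ℝ × (Fin m → ℝ) :=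
    fun q => (pd1 (pd1 (pd1 g)) q, q.2) with hΦdef
  have hone : ((⊤:ℕ∞) : WithTop ℕ∞) ≠ 0 := by simp
  have hΦat : ContDiffAt ℝ ((⊤:ℕ∞) : WithTop ℕ∞) Φ c :=
    (hg3.contDiffAt (hWopen.mem_nhds hmem)).prodMk contDiffAt_snd
  have hΦ' : HasFDerivAt Φ
      ((shearEquiv (fderiv ℝ (pd1 (pd1 (pd1 g))) c) hDne :
        (ℝ × (Fin m → ℝ)) ≃L[ℝ] (ℝ × (Fin m → ℝ))) : _ →L[ℝ] _) c := by
    rw [shearEquiv_coe]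
    exact (((hg3.contDiffAt (hWopen.mem_nhds hmem)).differentiableAt
      hone).hasFDerivAt).prodMk hasFDerivAt_snd
  set Ψ := hΦat.toOpenPartialHomeomorph Φ hΦ' hone with hΨdef
  have hΨcoe : (Ψ : (ℝ × (Fin m → ℝ)) → (ℝ × (Fin m → ℝ))) = Φ := rfl
  have hsrc : c ∈ Ψ.source := hΦat.mem_toOpenPartialHomeomorph_source hΦ' hone
  have htgt : Φ c ∈ Ψ.target := hΦat.image_mem_toOpenPartialHomeomorph_target hΦ' hone
  -- smoothness of the inverse on a neighborhood
  set V : Set (ℝ × (Fin m → ℝ)) := W ∩ (pd1 (pd1 (pd1 (pd1 g)))) ⁻¹' {(0:ℝ)}ᶜ with hVdef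
  have hVopen : IsOpen V :=
    hg4.continuousOn.isOpen_inter_preimage hWopen isOpen_compl_singleton
  set T₁ : Set (ℝ × (Fin m → ℝ)) := Ψ.target ∩ Ψ.symm ⁻¹' V with hT₁def
  have hT₁open : IsOpen T₁ := Ψ.symm.isOpen_inter_preimage hVopen
  have hΦcval : Φ c = ((0:ℝ), wb) := by
    rw [hΦdef]; simp only [hc3]; rfl
  have hsymmc : Ψ.symm (Φ c) = c := Ψ.left_inv hsrc
  have hT₁mem : Φ c ∈ T₁ := by
    refine ⟨htgt, ?_⟩
    rw [Set.mem_preimage, hsymmc]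
    exact ⟨hmem, h4⟩
  have hsymm_smooth : ContDiffOn ℝ (⊤:ℕ∞) Ψ.symm T₁ := by
    intro y hy
    obtain ⟨hyt, hyV⟩ := hy
    have hyW : Ψ.symm y ∈ W := hyV.1
    have hy4 : pd1 (pd1 (pd1 (pd1 g))) (Ψ.symm y) ≠ 0 := hyV.2
    have hDq : fderiv ℝ (pd1 (pd1 (pd1 g))) (Ψ.symm y) (1,0) ≠ 0 := by
      rw [← pd1_eq_fderiv hWopen hg3 hyW]; exact hy4
    have hΦat' : ContDiffAt ℝ ((⊤:ℕ∞) : WithTop ℕ∞) Φ (Ψ.symm y) :=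
      (hg3.contDiffAt (hWopen.mem_nhds hyW)).prodMk contDiffAt_snd
    have hΦ'' : HasFDerivAt Φ
        ((shearEquiv (fderiv ℝ (pd1 (pd1 (pd1 g))) (Ψ.symm y)) hDq :
          (ℝ × (Fin m → ℝ)) ≃L[ℝ] (ℝ × (Fin m → ℝ))) : _ →L[ℝ] _) (Ψ.symm y) := by
      rw [shearEquiv_coe]
      exact (((hg3.contDiffAt (hWopen.mem_nhds hyW)).differentiableAt
        hone).hasFDerivAt).prodMk hasFDerivAt_snd
    exact (Ψ.contDiffAt_symm hyt hΦ'' hΦat').contDiffWithinAt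
  -- definition of σ and f
  set σ : (Fin m → ℝ) → ℝ × (Fin m → ℝ) := fun w => Ψ.symm ((0:ℝ), w) with hσdef
  set f : (Fin m → ℝ) → ℝ := fun w => (σ w).1 with hfdef
  set U₀ : Set (Fin m → ℝ) := {w | ((0:ℝ), w) ∈ T₁} with hU₀def
  have hU₀open : IsOpen U₀ :=
    hT₁open.preimage (by continuity : Continuous fun w : Fin m → ℝ => ((0:ℝ), w))
  have hwbU₀ : wb ∈ U₀ := by
    have := hT₁mem
    rw [hΦcval] at this
    exact this
  have hσsmooth : ContDiffOn ℝ (⊤:ℕ∞) σ U₀ :=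
    hsymm_smooth.comp ((contDiff_const.prodMk contDiff_id).contDiffOn) (fun w hw => hw)
  have hfsmooth0 : ContDiffOn ℝ (⊤:ℕ∞) f U₀ := contDiff_fst.comp_contDiffOn hσsmooth
  have hσΦ : ∀ w ∈ U₀, Φ (σ w) = ((0:ℝ), w) := by
    intro w hw
    have : Ψ (Ψ.symm ((0:ℝ), w)) = ((0:ℝ), w) := Ψ.right_inv hw.1
    rw [hΨcoe] at this
    exact this
  have hσsnd : ∀ w ∈ U₀, σ w = (f w, w) := by
    intro w hw
    have h := hσΦ w hw
    have h2' : (σ w).2 = w := congrArg Prod.snd h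
    exact Prod.ext rfl h2'
  have hg3σ : ∀ w ∈ U₀, pd1 (pd1 (pd1 g)) (σ w) = 0 := by
    intro w hw
    exact congrArg Prod.fst (hσΦ w hw)
  have hσwb : σ wb = c := by
    rw [hσdef]
    simp only []
    rw [← hΦcval]
    exact hsymmc
  have hfwb : f wb = xb := by
    rw [hfdef]
    simp only [hσwb]; rfl
  -- choice of radius
  obtain ⟨r, hr0, hrsub⟩ := Metric.nhds_basis_closedBall.mem_iff.1
    ((hWopen.inter (hW'open.inter Ψ.open_source)).mem_nhds ⟨hmem, hW'mem, hsrc⟩)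
  have hballW : Metric.closedBall c r ⊆ W := fun q hq => (hrsub hq).1
  have hballW' : Metric.ball c (r/2) ⊆ W' := fun q hq =>
    (hrsub (Metric.closedBall_subset_closedBall (by linarith)
      (Metric.ball_subset_closedBall hq))).2.1
  have hballsrc : Metric.ball c (r/2) ⊆ Ψ.source := fun q hq =>
    (hrsub (Metric.closedBall_subset_closedBall (by linarith)
      (Metric.ball_subset_closedBall hq))).2.2
  have hball2W : Metric.closedBall c (r/2) ⊆ W := fun q hq =>
    hballW (Metric.closedBall_subset_closedBall (by linarith) hq)
  -- extensions
  obtain ⟨H3, hH3smooth, hH3eq⟩ := smooth_extension hWopen hg3 hr0 hballW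
  obtain ⟨H4, hH4smooth, hH4eq⟩ := smooth_extension hWopen hg4 hr0 hballW
  -- U₂ and N
  set U₂ : Set (Fin m → ℝ) := U₀ ∩ σ ⁻¹' (Metric.ball c (r/2)) with hU₂def
  have hU₂open : IsOpen U₂ :=
    hσsmooth.continuousOn.isOpen_inter_preimage hU₀open Metric.isOpen_ball
  have hwbU₂ : wb ∈ U₂ := ⟨hwbU₀, by
    rw [Set.mem_preimage, hσwb]
    exact Metric.mem_ball_self (by linarith)⟩
  set N : Set (ℝ × (Fin m → ℝ)) := Metric.ball c (r/2) ∩ (Set.univ ×ˢ U₂) with hNdef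
  have hNopen : IsOpen N := Metric.isOpen_ball.inter (isOpen_univ.prod hU₂open)
  have hcN : c ∈ N := ⟨Metric.mem_ball_self (by linarith), ⟨trivial, hwbU₂⟩⟩
  have hNW : N ⊆ W := fun q hq => hball2W (Metric.ball_subset_closedBall hq.1)
  -- singular point facts
  have hσball : ∀ w ∈ U₂, σ w ∈ Metric.ball c (r/2) := fun w hw => hw.2
  have hσW : ∀ w ∈ U₂, σ w ∈ W := fun w hw =>
    hball2W (Metric.ball_subset_closedBall (hσball w hw))
  have hg2σ : ∀ w ∈ U₂, pd1 (pd1 g) (σ w) = 0 := by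
    intro w hw
    have h3' : pd1 (pd1 (pd1 g)) (σ w) = 0 := hg3σ w hw.1
    have hmem' : σ w ∈ {q | q ∈ W' ∧ pd1 (pd1 (pd1 g)) q = 0} :=
      ⟨hballW' (hσball w hw), h3'⟩
    rw [← hW'eq] at hmem'
    exact hmem'.2
  -- the divided functions
  set F₁ : ((ℝ × (ℝ × (Fin m → ℝ))) × ℝ) → ℝ := fun pt =>
    ((1 - pt.2)^2/2) * H4 ((1 - pt.2) * pt.1.1 + pt.2 * pt.1.2.1, pt.1.2.2) with hF₁def
  set F₂ : ((ℝ × (ℝ × (Fin m → ℝ))) × ℝ) → ℝ := fun pt =>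
    ((1 - pt.2)^2/2) * (2 * H3 ((1 - pt.2) * pt.1.1 + pt.2 * pt.1.2.1, pt.1.2.2)
      + ((1 - pt.2) * pt.1.1 + pt.2 * pt.1.2.1) *
        H4 ((1 - pt.2) * pt.1.1 + pt.2 * pt.1.2.1, pt.1.2.2)) with hF₂def
  have hinner : ContDiff ℝ (⊤:ℕ∞) (fun pt : (ℝ × (ℝ × (Fin m → ℝ))) × ℝ =>
      (((1 - pt.2) * pt.1.1 + pt.2 * pt.1.2.1 : ℝ), pt.1.2.2)) := by
    apply ContDiff.prodMk
    · exact ((contDiff_const.sub contDiff_snd).mul (contDiff_fst.comp contDiff_fst)).add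
        (contDiff_snd.mul (contDiff_fst.comp (contDiff_snd.comp contDiff_fst)))
    · exact contDiff_snd.comp (contDiff_snd.comp contDiff_fst)
  have hpoly : ContDiff ℝ (⊤:ℕ∞) (fun pt : (ℝ × (ℝ × (Fin m → ℝ))) × ℝ =>
      ((1 - pt.2)^2/2 : ℝ)) := ((contDiff_const.sub contDiff_snd).pow 2).div_const 2
  have hF₁smooth : ContDiff ℝ (⊤:ℕ∞) F₁ := hpoly.mul (hH4smooth.comp hinner)
  have hF₂smooth : ContDiff ℝ (⊤:ℕ∞) F₂ := by
    apply hpoly.mul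
    apply ContDiff.add
    · exact contDiff_const.mul (hH3smooth.comp hinner)
    · exact (((contDiff_const.sub contDiff_snd).mul (contDiff_fst.comp contDiff_fst)).add
        (contDiff_snd.mul (contDiff_fst.comp (contDiff_snd.comp contDiff_fst)))).mul
        (hH4smooth.comp hinner)
  set φ₁ : ℝ × (Fin m → ℝ) → ℝ := fun q => ∫ t in (0:ℝ)..1, F₁ ((f q.2, q), t) with hφ₁def
  set φ₂ : ℝ × (Fin m → ℝ) → ℝ := fun q => ∫ t in (0:ℝ)..1, F₂ ((f q.2, q), t) with hφ₂def
  set k₁ : (Fin m → ℝ) → ℝ := fun w => pd1 g (f w, w) with hk₁def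
  set k₂ : (Fin m → ℝ) → ℝ := fun w => Zfun g (f w, w) with hk₂def
  have hfU₂ : ContDiffOn ℝ (⊤:ℕ∞) f U₂ := hfsmooth0.mono Set.inter_subset_left
  have hmapN : ContDiffOn ℝ (⊤:ℕ∞)
      (fun q : ℝ × (Fin m → ℝ) => ((f q.2, q) : ℝ × (ℝ × (Fin m → ℝ)))) N :=
    ContDiffOn.prodMk (hfU₂.comp contDiff_snd.contDiffOn (fun q hq => hq.2.2)) contDiffOn_id
  have hφ₁smooth : ContDiffOn ℝ (⊤:ℕ∞) φ₁ N := by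
    refine contDiffOn_infty.mpr fun n => ?_
    exact (contDiff_parametric_integral n F₁ hF₁smooth).comp_contDiffOn
      (hmapN.of_le (by exact_mod_cast le_top))
  have hφ₂smooth : ContDiffOn ℝ (⊤:ℕ∞) φ₂ N := by
    refine contDiffOn_infty.mpr fun n => ?_
    exact (contDiff_parametric_integral n F₂ hF₂smooth).comp_contDiffOn
      (hmapN.of_le (by exact_mod_cast le_top))
  have hmapU₂ : ContDiffOn ℝ (⊤:ℕ∞)
      (fun w : Fin m → ℝ => ((f w, w) : ℝ × (Fin m → ℝ))) U₂ :=
    hfU₂.prodMk contDiffOn_id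
  have hmapsToW : ∀ w ∈ U₂, ((f w, w) : ℝ × (Fin m → ℝ)) ∈ W := by
    intro w hw
    have := hσW w hw
    rwa [hσsnd w hw.1] at this
  have hk₁smooth : ContDiffOn ℝ (⊤:ℕ∞) k₁ U₂ :=
    hg1.comp hmapU₂ hmapsToW
  have hZW : ContDiffOn ℝ (⊤:ℕ∞) (Zfun g) W :=
    (contDiff_fst.contDiffOn.mul hg1).sub hg
  have hk₂smooth : ContDiffOn ℝ (⊤:ℕ∞) k₂ U₂ :=
    hZW.comp hmapU₂ hmapsToW
  -- graph equality
  have hgraph : {q | q ∈ N ∧ pd1 (pd1 g) q = 0} = {q | ∃ w ∈ U₂, q = (f w, w)} ∩ N := by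
    ext q
    constructor
    · rintro ⟨hqN, hq2⟩
      have hqW' : q ∈ W' := hballW' hqN.1
      have hq3 : pd1 (pd1 (pd1 g)) q = 0 := ((Set.ext_iff.mp hW'eq q).mp ⟨hqW', hq2⟩).2
      have hqsrc : q ∈ Ψ.source := hballsrc hqN.1
      have hΦq : Φ q = ((0:ℝ), q.2) := by rw [hΦdef]; simp only [hq3]
      have hsymmq : σ q.2 = q := by
        rw [hσdef]
        simp only []
        rw [← hΦq]
        have := Ψ.left_inv hqsrc
        rw [hΨcoe] at this
        exact this
      have hq2U₂ : q.2 ∈ U₂ := hqN.2.2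
      refine ⟨⟨q.2, hq2U₂, ?_⟩, hqN⟩
      have hf1 : f q.2 = q.1 := by rw [hfdef]; simp only [hsymmq]
      rw [hf1]
    · rintro ⟨⟨w, hwU₂, rfl⟩, hqN⟩
      refine ⟨hqN, ?_⟩
      have hσw := hσsnd w hwU₂.1
      have h0 : pd1 (pd1 g) (σ w) = 0 := hg2σ w hwU₂
      rwa [hσw] at h0
  -- main Taylor identities
  have hkey : ∀ q ∈ N, Pfun g q = (q.1 - f q.2) ^ 3 * φ₁ q + k₁ q.2 ∧
      Zfun g q = (q.1 - f q.2) ^ 3 * φ₂ q + k₂ q.2 := by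
    rintro ⟨x, w⟩ hq
    have hwU₂ : w ∈ U₂ := hq.2.2
    have hwU₀ : w ∈ U₀ := hwU₂.1
    have hbw : ((f w, w) : ℝ × (Fin m → ℝ)) ∈ Metric.ball c (r/2) := by
      have := hσball w hwU₂
      rwa [hσsnd w hwU₀] at this
    have hxw : ((x, w) : ℝ × (Fin m → ℝ)) ∈ Metric.ball c (r/2) := hq.1
    have hseg : ∀ s ∈ Set.uIcc (0:ℝ) 1,
        (((1-s) * f w + s * x, w) : ℝ × (Fin m → ℝ)) ∈ Metric.ball c (r/2) := by
      intro s hs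
      rw [Set.uIcc_of_le (by norm_num : (0:ℝ) ≤ 1)] at hs
      have hcv := (convex_ball c (r/2)) hbw hxw
        (by linarith [hs.2] : (0:ℝ) ≤ 1 - s) hs.1 (by ring)
      have heq : (1-s) • ((f w, w) : ℝ × (Fin m → ℝ)) + s • ((x, w) : ℝ × (Fin m → ℝ))
          = (((1-s) * f w + s * x, w) : ℝ × (Fin m → ℝ)) := by
        refine Prod.ext rfl ?_
        show (1-s) • w + s • w = w
        rw [← add_smul]
        norm_num
      rwa [heq] at hcv
    have hsegW : ∀ s ∈ Set.uIcc (0:ℝ) 1,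
        (((1-s) * f w + s * x, w) : ℝ × (Fin m → ℝ)) ∈ W := fun s hs =>
      hball2W (Metric.ball_subset_closedBall (hseg s hs))
    have hsegCB : ∀ s ∈ Set.uIcc (0:ℝ) 1,
        (((1-s) * f w + s * x, w) : ℝ × (Fin m → ℝ)) ∈ Metric.closedBall c (r/2) :=
      fun s hs => Metric.ball_subset_closedBall (hseg s hs)
    have hg2b : pd1 (pd1 g) (f w, w) = 0 := by
      have := hg2σ w hwU₂; rwa [hσsnd w hwU₀] at this
    have hg3b : pd1 (pd1 (pd1 g)) (f w, w) = 0 := by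
      have := hg3σ w hwU₀; rwa [hσsnd w hwU₀] at this
    have hℓ : ∀ s : ℝ, HasDerivAt (fun t : ℝ => (1-t) * f w + t * x) (x - f w) s := by
      intro s
      have h := (((hasDerivAt_id s).const_sub 1).mul_const (f w)).add
        ((hasDerivAt_id s).mul_const x)
      exact h.congr_deriv (by ring)
    have hsegCont : Continuous (fun s : ℝ => (((1-s) * f w + s * x, w) : ℝ × (Fin m → ℝ))) :=
      (((continuous_const.sub continuous_id).mul continuous_const).add
        (continuous_id.mul continuous_const)).prodMk continuous_const
    constructor
    · -- the P identity
      have hT := cubic_taylor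
        (u := fun s => pd1 g ((1-s) * f w + s * x, w))
        (u1 := fun s => pd1 (pd1 g) ((1-s) * f w + s * x, w) * (x - f w))
        (u2 := fun s => pd1 (pd1 (pd1 g)) ((1-s) * f w + s * x, w) * (x - f w) ^ 2)
        (u3 := fun s => pd1 (pd1 (pd1 (pd1 g))) ((1-s) * f w + s * x, w) * (x - f w) ^ 3)
        (fun s hs => by have h := (slice_hasDerivAt hWopen hg1 (hsegW s hs)).comp s (hℓ s); exact h)
        (fun s hs => by
          have h := ((slice_hasDerivAt hWopen hg2 (hsegW s hs)).comp s (hℓ s)).mul_const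
            (x - f w)
          exact h.congr_deriv (by ring))
        (fun s hs => by
          have h := ((slice_hasDerivAt hWopen hg3 (hsegW s hs)).comp s (hℓ s)).mul_const
            ((x - f w) ^ 2)
          exact h.congr_deriv (by ring))
        ((hg4.continuousOn.comp hsegCont.continuousOn hsegW).mul continuousOn_const)
      simp only [sub_self, sub_zero, zero_mul, mul_zero, zero_add, add_zero, one_mul,
        mul_one, zero_div, hg2b, hg3b] at hT
      have hIeq : (∫ t in (0:ℝ)..1, ((1-t)^2/2) *
          (pd1 (pd1 (pd1 (pd1 g))) ((1-t) * f w + t * x, w) * (x - f w) ^ 3))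
          = (x - f w) ^ 3 * φ₁ (x, w) := by
        have hφval : φ₁ (x, w) = ∫ t in (0:ℝ)..1,
            ((1-t)^2/2) * H4 ((1-t) * f w + t * x, w) := by
          rw [hφ₁def]
        rw [hφval, ← intervalIntegral.integral_const_mul]
        apply intervalIntegral.integral_congr
        intro t ht
        simp only [hH4eq _ (hsegCB t ht)]
        ring
      rw [hIeq] at hT
      show pd1 g (x, w) = (x - f w) ^ 3 * φ₁ (x, w) + pd1 g (f w, w)
      rw [hT]
      ring
    · -- the Z identity
      have hZsl : ∀ a : ℝ, ((a, w) : ℝ × (Fin m → ℝ)) ∈ W →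
          HasDerivAt (fun t => Zfun g (t, w)) (a * pd1 (pd1 g) (a, w)) a := by
        intro a ha
        have hsl1 := slice_hasDerivAt hWopen hg1 ha
        have hsl0 := slice_hasDerivAt hWopen hg ha
        have h := ((hasDerivAt_id a).mul hsl1).sub hsl0
        exact h.congr_deriv (by simp only [id_eq]; ring)
      have hT := cubic_taylor
        (u := fun s => Zfun g ((1-s) * f w + s * x, w))
        (u1 := fun s => (((1-s) * f w + s * x) * pd1 (pd1 g) ((1-s) * f w + s * x, w))
          * (x - f w))
        (u2 := fun s => (pd1 (pd1 g) ((1-s) * f w + s * x, w)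
          + ((1-s) * f w + s * x) * pd1 (pd1 (pd1 g)) ((1-s) * f w + s * x, w))
          * (x - f w) ^ 2)
        (u3 := fun s => (2 * pd1 (pd1 (pd1 g)) ((1-s) * f w + s * x, w)
          + ((1-s) * f w + s * x) * pd1 (pd1 (pd1 (pd1 g))) ((1-s) * f w + s * x, w))
          * (x - f w) ^ 3)
        (fun s hs => by have h := (hZsl _ (hsegW s hs)).comp s (hℓ s); exact h)
        (fun s hs => by
          have hinner2 : HasDerivAt (fun a : ℝ => a * pd1 (pd1 g) (a, w))
              (1 * pd1 (pd1 g) ((1-s) * f w + s * x, w)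
                + ((1-s) * f w + s * x) * pd1 (pd1 (pd1 g)) ((1-s) * f w + s * x, w))
              ((1-s) * f w + s * x) :=
            (hasDerivAt_id _).mul (slice_hasDerivAt hWopen hg2 (hsegW s hs))
          have h := (hinner2.comp s (hℓ s)).mul_const (x - f w)
          exact h.congr_deriv (by ring))
        (fun s hs => by
          have hinner2 : HasDerivAt
              (fun a : ℝ => pd1 (pd1 g) (a, w) + a * pd1 (pd1 (pd1 g)) (a, w))
              (pd1 (pd1 (pd1 g)) ((1-s) * f w + s * x, w)
                + (1 * pd1 (pd1 (pd1 g)) ((1-s) * f w + s * x, w)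
                  + ((1-s) * f w + s * x) * pd1 (pd1 (pd1 (pd1 g))) ((1-s) * f w + s * x, w)))
              ((1-s) * f w + s * x) :=
            (slice_hasDerivAt hWopen hg2 (hsegW s hs)).add
              ((hasDerivAt_id _).mul (slice_hasDerivAt hWopen hg3 (hsegW s hs)))
          have h := (hinner2.comp s (hℓ s)).mul_const ((x - f w) ^ 2)
          exact h.congr_deriv (by ring))
        (by
          apply ContinuousOn.mul _ continuousOn_const
          apply ContinuousOn.add
          · exact continuousOn_const.mul
              (hg3.continuousOn.comp hsegCont.continuousOn hsegW)
          · exact (Continuous.continuousOn (((continuous_const.sub continuous_id).mul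
                continuous_const).add (continuous_id.mul continuous_const))).mul
              (hg4.continuousOn.comp hsegCont.continuousOn hsegW))
      simp only [sub_self, sub_zero, zero_mul, mul_zero, zero_add, add_zero, one_mul,
        mul_one, zero_div, hg2b, hg3b] at hT
      have hIeq : (∫ t in (0:ℝ)..1, ((1-t)^2/2) *
          ((2 * pd1 (pd1 (pd1 g)) ((1-t) * f w + t * x, w)
            + ((1-t) * f w + t * x) * pd1 (pd1 (pd1 (pd1 g))) ((1-t) * f w + t * x, w))
            * (x - f w) ^ 3))
          = (x - f w) ^ 3 * φ₂ (x, w) := by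
        have hφval : φ₂ (x, w) = ∫ t in (0:ℝ)..1,
            ((1-t)^2/2) * (2 * H3 ((1-t) * f w + t * x, w)
              + ((1-t) * f w + t * x) * H4 ((1-t) * f w + t * x, w)) := by
          rw [hφ₂def]
        rw [hφval, ← intervalIntegral.integral_const_mul]
        apply intervalIntegral.integral_congr
        intro t ht
        simp only [hH4eq _ (hsegCB t ht), hH3eq _ (hsegCB t ht)]
        ring
      rw [hIeq] at hT
      show Zfun g (x, w) = (x - f w) ^ 3 * φ₂ (x, w) + Zfun g (f w, w)
      rw [hT]
      ring
  -- nonvanishing of φ₁ at the base point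
  have hφ₁ne : φ₁ c ≠ 0 := by
    have hccb : c ∈ Metric.closedBall c (r/2) := Metric.mem_closedBall_self (by linarith)
    have hval : φ₁ c = pd1 (pd1 (pd1 (pd1 g))) c / 6 := by
      have h1 : φ₁ c = ∫ t in (0:ℝ)..1, ((1-t)^2/2) * H4 ((1-t) * f wb + t * xb, wb) := by
        rw [hφ₁def]
      rw [h1]
      have h2 : (fun t : ℝ => ((1-t)^2/2) * H4 ((1-t) * f wb + t * xb, wb))
          = fun t : ℝ => ((1-t)^2/2) * H4 c := by
        funext t
        rw [hfwb, show (1-t) * xb + t * xb = xb from by ring]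
      rw [h2, integ16, hH4eq _ hccb]
    rw [hval]
    exact div_ne_zero h4 (by norm_num)
  exact ⟨N, U₂, f, φ₁, φ₂, k₁, k₂, hNopen, hcN, hNW, hU₂open, hwbU₂, hfU₂, hfwb, hgraph,
    hφ₁smooth, hφ₂smooth, hk₁smooth, hk₂smooth, hkey, hφ₁ne⟩
end

section
/- For all indices t, u, v ∈ {1,…,n} and all r ∈ ℝ^n: D[t v | u](r) − D[u | t v](r) = ∂_t∂_u∂_v g(r). (This is the coordinate content of the recovery of the canonical cubic tensor from the canonical divergence, C(X,Y,Z) = −D_M[Z|XY] + D_M[XY|Z], since C is locally the third derivative of the generating function.) -/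
/-!
Statement 7: recovery of the canonical cubic tensor from the canonical
divergence: `D[t v | u](r) - D[u | t v](r) = ∂_t∂_u∂_v g(r)`.
-/

/-- Partial derivative in the k-th coordinate. -/
noncomputable def pder {n : ℕ} (k : Fin n) (g : (Fin n → ℝ) → ℝ) : (Fin n → ℝ) → ℝ :=
  fun a => deriv (fun t => g (Function.update a k t)) (a k)

/-- The canonical divergence `D(a,b)` associated to a generating function `g`
and a partition `I ⊔ J` of the index set. -/
noncomputable def canDiv {n : ℕ} (I J : Finset (Fin n)) (g : (Fin n → ℝ) → ℝ)
    (a b : Fin n → ℝ) : ℝ :=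
  g a - g b - ∑ j ∈ J, pder j g a * (a j - b j) + ∑ i ∈ I, pder i g b * (b i - a i)

/-- Partial derivative in the u-th coordinate of the first argument. -/
noncomputable def dFst {n : ℕ} (u : Fin n) (F : (Fin n → ℝ) → (Fin n → ℝ) → ℝ) :
    (Fin n → ℝ) → (Fin n → ℝ) → ℝ :=
  fun a b => deriv (fun t => F (Function.update a u t) b) (a u)

/-- Partial derivative in the u-th coordinate of the second argument. -/
noncomputable def dSnd {n : ℕ} (u : Fin n) (F : (Fin n → ℝ) → (Fin n → ℝ) → ℝ) :
    (Fin n → ℝ) → (Fin n → ℝ) → ℝ :=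
  fun a b => deriv (fun t => F a (Function.update b u t)) (b u)

section helpers
variable {n : ℕ}

lemma hasDerivAt_update_line (a : Fin n → ℝ) (k : Fin n) (x : ℝ) :
    HasDerivAt (fun t : ℝ => Function.update a k t) (Pi.single k (1:ℝ)) x := by
  have h : (fun t : ℝ => Function.update a k t)
      = fun t : ℝ => a + (t - a k) • (Pi.single k (1:ℝ) : Fin n → ℝ) := by
    funext s
    funext i
    rcases eq_or_ne i k with rfl | hik
    · simp
    · simp [Function.update_of_ne hik, Pi.single_apply, hik]
  rw [h]
  simpa using (((hasDerivAt_id x).sub_const (a k)).smul_const (Pi.single k (1:ℝ) : Fin n → ℝ)).const_add a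

lemma hasDerivAt_pder {f : (Fin n → ℝ) → ℝ} {a : Fin n → ℝ} (k : Fin n)
    (hf : DifferentiableAt ℝ f a) :
    HasDerivAt (fun s => f (Function.update a k s)) (fderiv ℝ f a (Pi.single k (1:ℝ))) (a k) := by
  have hupd : Function.update a k (a k) = a := Function.update_eq_self k a
  have hf' : HasFDerivAt f (fderiv ℝ f a) (Function.update a k (a k)) := by
    rw [hupd]; exact hf.hasFDerivAt
  exact hf'.comp_hasDerivAt (a k) (hasDerivAt_update_line a k (a k))

lemma pder_eq_fderiv {f : (Fin n → ℝ) → ℝ} (k : Fin n) {a : Fin n → ℝ}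
    (hf : DifferentiableAt ℝ f a) :
    pder k f a = fderiv ℝ f a (Pi.single k (1:ℝ)) := (hasDerivAt_pder k hf).deriv

lemma hasDerivAt_pder' {f : (Fin n → ℝ) → ℝ} {a : Fin n → ℝ} (k : Fin n)
    (hf : DifferentiableAt ℝ f a) :
    HasDerivAt (fun s => f (Function.update a k s)) (pder k f a) (a k) := by
  rw [pder_eq_fderiv k hf]; exact hasDerivAt_pder k hf

lemma hasDerivAt_update_apply (a : Fin n → ℝ) (k i : Fin n) (x : ℝ) :
    HasDerivAt (fun s : ℝ => Function.update a k s i) (if i = k then 1 else 0) x := by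
  have h : (fun s : ℝ => Function.update a k s i) = fun s : ℝ => if i = k then s else a i := by
    funext s; rw [Function.update_apply]
  rw [h]
  split_ifs
  · exact hasDerivAt_id x
  · exact hasDerivAt_const x _

lemma contDiff_pder (k : Fin n) {f : (Fin n → ℝ) → ℝ} (hf : ContDiff ℝ (⊤ : ℕ∞) f) :
    ContDiff ℝ (⊤ : ℕ∞) (pder k f) := by
  have h : pder k f = fun a => fderiv ℝ f a (Pi.single k (1:ℝ)) := by
    funext a
    exact pder_eq_fderiv k ((hf.differentiable (by decide)) a)
  rw [h]
  exact (hf.fderiv_right (le_refl _)).clm_apply contDiff_const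

lemma pder_comm {f : (Fin n → ℝ) → ℝ} (hf : ContDiff ℝ (⊤ : ℕ∞) f) (i k : Fin n) :
    pder i (pder k f) = pder k (pder i f) := by
  funext a
  have hdf : Differentiable ℝ f := hf.differentiable (by decide)
  have hfd : ContDiff ℝ (⊤ : ℕ∞) (fderiv ℝ f) := hf.fderiv_right (le_refl _)
  have hrepr : ∀ j : Fin n, pder j f = fun x => fderiv ℝ f x (Pi.single j (1:ℝ)) := by
    intro j; funext x; exact pder_eq_fderiv j (hdf x)
  have hdiff : ∀ j : Fin n, DifferentiableAt ℝ (pder j f) a := fun j =>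
    ((contDiff_pder j hf).differentiable (by decide)) a
  have key : ∀ j m : Fin n,
      pder j (pder m f) a = fderiv ℝ (fderiv ℝ f) a (Pi.single j 1) (Pi.single m 1) := by
    intro j m
    rw [pder_eq_fderiv j (hdiff m), hrepr m]
    rw [fderiv_clm_apply ((hfd.differentiable (by decide)) a) (differentiableAt_const _)]
    simp
  rw [key i k, key k i]
  exact (hf.contDiffAt.isSymmSndFDerivAt (by rw [minSmoothness_of_isRCLikeNormedField]; exact WithTop.coe_le_coe.mpr le_top)) _ _

lemma step1 (I J : Finset (Fin n)) {g : (Fin n → ℝ) → ℝ} (hg : ContDiff ℝ (⊤ : ℕ∞) g)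
    (u : Fin n) :
    dSnd u (canDiv I J g) = fun a b =>
      (if u ∈ J then pder u g a else 0) - pder u g b
        + (∑ i ∈ I, pder u (pder i g) b * (b i - a i))
        + (if u ∈ I then pder u g b else 0) := by
  have hdg : ∀ x : Fin n → ℝ, DifferentiableAt ℝ g x := fun x =>
    (hg.differentiable (by decide)) x
  have hdp : ∀ (i : Fin n) (x : Fin n → ℝ), DifferentiableAt ℝ (pder i g) x := fun i x =>
    ((contDiff_pder i hg).differentiable (by decide)) x
  funext a b
  show deriv (fun s => canDiv I J g a (Function.update b u s)) (b u) = _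
  have h := (((hasDerivAt_const (b u) (g a)).fun_sub (hasDerivAt_pder' u (hdg b))).fun_sub
      (HasDerivAt.fun_sum (fun j (_ : j ∈ J) =>
        ((hasDerivAt_update_apply b u j (b u)).const_sub (a j)).const_mul (pder j g a)))).fun_add
    (HasDerivAt.fun_sum (fun i (_ : i ∈ I) =>
      (hasDerivAt_pder' u (hdp i b)).fun_mul ((hasDerivAt_update_apply b u i (b u)).sub_const (a i))))
  have h2 : deriv (fun s => canDiv I J g a (Function.update b u s)) (b u)
      = 0 - pder u g b - (∑ j ∈ J, pder j g a * -(if j = u then (1:ℝ) else 0))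
        + ∑ i ∈ I, (pder u (pder i g) b * (Function.update b u (b u) i - a i)
            + pder i g (Function.update b u (b u)) * (if i = u then (1:ℝ) else 0)) := by
    simp only [canDiv]
    exact h.deriv
  rw [h2]
  simp only [Function.update_eq_self, mul_neg, mul_ite, mul_one, mul_zero,
    Finset.sum_neg_distrib, Finset.sum_add_distrib, Finset.sum_ite_eq', zero_sub]
  ring

lemma step2 (I J : Finset (Fin n)) {g : (Fin n → ℝ) → ℝ} (hg : ContDiff ℝ (⊤ : ℕ∞) g)
    (u v : Fin n) :
    dFst v (dSnd u (canDiv I J g)) = fun a b =>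
      (if u ∈ J then pder v (pder u g) a else 0)
        - (if v ∈ I then pder u (pder v g) b else 0) := by
  have hdp : ∀ (i : Fin n) (x : Fin n → ℝ), DifferentiableAt ℝ (pder i g) x := fun i x =>
    ((contDiff_pder i hg).differentiable (by decide)) x
  funext a b
  show deriv (fun s => dSnd u (canDiv I J g) (Function.update a v s) b) (a v) = _
  rw [step1 I J hg u]
  have e1 : HasDerivAt (fun s => if u ∈ J then pder u g (Function.update a v s) else 0)
      (if u ∈ J then pder v (pder u g) a else 0) (a v) := by
    split_ifs with h
    · exact hasDerivAt_pder' v (hdp u a)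
    · exact hasDerivAt_const _ _
  have h := ((e1.sub_const (pder u g b)).fun_add
      (HasDerivAt.fun_sum (fun i (_ : i ∈ I) =>
        ((hasDerivAt_update_apply a v i (a v)).const_sub (b i)).const_mul
          (pder u (pder i g) b)))).add_const (if u ∈ I then pder u g b else 0)
  rw [h.deriv]
  simp only [mul_neg, mul_ite, mul_one, mul_zero, Finset.sum_neg_distrib, Finset.sum_ite_eq']
  ring

lemma step3 (I J : Finset (Fin n)) {g : (Fin n → ℝ) → ℝ} (hg : ContDiff ℝ (⊤ : ℕ∞) g)
    (t u v : Fin n) (a b : Fin n → ℝ) :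
    dFst t (dFst v (dSnd u (canDiv I J g))) a b
      = if u ∈ J then pder t (pder v (pder u g)) a else 0 := by
  have hdq : ∀ (i j : Fin n) (x : Fin n → ℝ), DifferentiableAt ℝ (pder i (pder j g)) x :=
    fun i j x => ((contDiff_pder i (contDiff_pder j hg)).differentiable (by decide)) x
  show deriv (fun s => dFst v (dSnd u (canDiv I J g)) (Function.update a t s) b) (a t) = _
  rw [step2 I J hg u v]
  have e1 : HasDerivAt (fun s => if u ∈ J then pder v (pder u g) (Function.update a t s) else 0)
      (if u ∈ J then pder t (pder v (pder u g)) a else 0) (a t) := by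
    split_ifs with h
    · exact hasDerivAt_pder' t (hdq v u a)
    · exact hasDerivAt_const _ _
  have h := e1.sub_const (if v ∈ I then pder u (pder v g) b else 0)
  rw [h.deriv]

lemma step2' (I J : Finset (Fin n)) {g : (Fin n → ℝ) → ℝ} (hg : ContDiff ℝ (⊤ : ℕ∞) g)
    (t v : Fin n) :
    dSnd t (dSnd v (canDiv I J g)) = fun a b =>
      -pder t (pder v g) b
        + (∑ i ∈ I, pder t (pder v (pder i g)) b * (b i - a i))
        + (if t ∈ I then pder v (pder t g) b else 0)
        + (if v ∈ I then pder t (pder v g) b else 0) := by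
  have hdp : ∀ (i : Fin n) (x : Fin n → ℝ), DifferentiableAt ℝ (pder i g) x := fun i x =>
    ((contDiff_pder i hg).differentiable (by decide)) x
  have hdq : ∀ (i j : Fin n) (x : Fin n → ℝ), DifferentiableAt ℝ (pder i (pder j g)) x :=
    fun i j x => ((contDiff_pder i (contDiff_pder j hg)).differentiable (by decide)) x
  funext a b
  show deriv (fun s => dSnd v (canDiv I J g) a (Function.update b t s)) (b t) = _
  rw [step1 I J hg v]
  beta_reduce
  have e4 : HasDerivAt (fun s => if v ∈ I then pder v g (Function.update b t s) else 0)
      (if v ∈ I then pder t (pder v g) b else 0) (b t) := by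
    split_ifs with h
    · exact hasDerivAt_pder' t (hdp v b)
    · exact hasDerivAt_const _ _
  have h := (((hasDerivAt_const (b t) (if v ∈ J then pder v g a else 0)).fun_sub
      (hasDerivAt_pder' t (hdp v b))).fun_add
      (HasDerivAt.fun_sum (fun i (_ : i ∈ I) =>
        (hasDerivAt_pder' t (hdq v i b)).fun_mul
          ((hasDerivAt_update_apply b t i (b t)).sub_const (a i))))).fun_add e4
  rw [h.deriv]
  simp only [Function.update_eq_self, mul_ite, mul_one, mul_zero,
    Finset.sum_add_distrib, Finset.sum_ite_eq']
  ring

lemma step3' (I J : Finset (Fin n)) {g : (Fin n → ℝ) → ℝ} (hg : ContDiff ℝ (⊤ : ℕ∞) g)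
    (t u v : Fin n) (a b : Fin n → ℝ) :
    dFst u (dSnd t (dSnd v (canDiv I J g))) a b
      = -(if u ∈ I then pder t (pder v (pder u g)) b else 0) := by
  show deriv (fun s => dSnd t (dSnd v (canDiv I J g)) (Function.update a u s) b) (a u) = _
  rw [step2' I J hg t v]
  have h := (((hasDerivAt_const (a u) (-pder t (pder v g) b)).fun_add
      (HasDerivAt.fun_sum (fun i (_ : i ∈ I) =>
        ((hasDerivAt_update_apply a u i (a u)).const_sub (b i)).const_mul
          (pder t (pder v (pder i g)) b)))).add_const
      (if t ∈ I then pder v (pder t g) b else 0)).add_const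
      (if v ∈ I then pder t (pder v g) b else 0)
  rw [h.deriv]
  simp only [mul_neg, mul_ite, mul_one, mul_zero, Finset.sum_neg_distrib, Finset.sum_ite_eq']
  ring


end helpers

theorem cubic_tensor_from_divergence {n : ℕ} (I J : Finset (Fin n))
    (hdisj : Disjoint I J) (hunion : I ∪ J = Finset.univ)
    (g : (Fin n → ℝ) → ℝ) (hg : ContDiff ℝ (⊤ : ℕ∞) g)
    (t u v : Fin n) (r : Fin n → ℝ) :
    dFst t (dFst v (dSnd u (canDiv I J g))) r r
      - dFst u (dSnd t (dSnd v (canDiv I J g))) r r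
      = pder t (pder u (pder v g)) r := by
  rw [step3 I J hg t u v r r, step3' I J hg t u v r r, sub_neg_eq_add]
  have hcomm : pder v (pder u g) = pder u (pder v g) := pder_comm hg v u
  have hu : u ∈ I ∪ J := hunion ▸ Finset.mem_univ u
  rcases Finset.mem_union.mp hu with hI | hJ
  · rw [if_neg (Finset.disjoint_left.mp hdisj hI), if_pos hI, zero_add, ← hcomm]
  · rw [if_pos hJ, if_neg (Finset.disjoint_right.mp hdisj hJ), add_zero, ← hcomm]
end
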